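/- PoT lower bound for atomic linear congestion games: for every k ≥ 1 there is a load-balancing game on a binary tree of depth k with 2-tribe partition and a tribal Nash equilibrium s^k with C(s^k) = 4k, while the profile where every player uses their lower node has cost k + 3; consequently the ratio C(s^k)/C(opt) ≥ 4k/(k+3), which tends to 4. -/

import Mathlib

open Finset

namespace Stmt17Aux

variable (k : ℕ)

abbrev N : ℕ := 2 ^ (k + 1)
abbrev M : ℕ := 2 ^ k

lemma Npos : 0 < N k := Nat.pow_pos (by norm_num)
lemma N_eq : N k = 2 * M k := by show 2^(k+1) = 2 * 2^k; rw [pow_succ]; ring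

noncomputable def an (v : ℕ) : ℝ :=
  if v = 0 then 0 else if v < 2 ^ k then (2:ℝ)⁻¹ ^ Nat.log 2 v else 4 * (2:ℝ)⁻¹ ^ k

lemma an_nonneg (v : ℕ) : 0 ≤ an k v := by
  unfold an; split_ifs <;> positivity

noncomputable def g (v : ℕ) : ℝ := if v = 0 then 0 else (2:ℝ)⁻¹ ^ Nat.log 2 v

lemma two_pow_inv_mul (m : ℕ) : (2:ℝ) ^ m * (2:ℝ)⁻¹ ^ m = 1 := by
  rw [inv_pow, mul_inv_cancel₀ (by positivity)]

lemma sum_g (m : ℕ) : ∑ v ∈ Finset.range (2 ^ m), g v = m := by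
  induction m with
  | zero => simp [g]
  | succ m ih =>
    rw [Finset.range_eq_Ico] at *
    rw [← Finset.sum_Ico_consecutive _ (Nat.zero_le (2^m)) (Nat.pow_le_pow_right (by norm_num) (Nat.le_succ m)), ih]
    have hconst : ∀ v ∈ Finset.Ico (2^m) (2^(m+1)), g v = (2:ℝ)⁻¹ ^ m := by
      intro v hv
      rw [Finset.mem_Ico] at hv
      have h1 : 1 ≤ (2:ℕ)^m := Nat.one_le_two_pow
      have hv0 : v ≠ 0 := by omega
      rw [g, if_neg hv0, Nat.log_eq_of_pow_le_of_lt_pow hv.1 hv.2]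
    rw [Finset.sum_congr rfl hconst, Finset.sum_const, Nat.card_Ico]
    have hc : (2:ℕ)^(m+1) - 2^m = 2^m := by rw [pow_succ]; omega
    rw [hc, nsmul_eq_mul]
    have h := two_pow_inv_mul m
    push_cast at h ⊢
    linarith [h]



/-- player p chooses: true = parent node (p/2), false = own node; junk players (<2) sit at node 0 -/
def choice (p : Fin (N k)) (b : Bool) : Fin (N k) :=
  if 2 <= p.val then
    (if b then ⟨p.val / 2, lt_of_le_of_lt (Nat.div_le_self _ _) p.isLt⟩ else p)
  else ⟨0, Npos k⟩

lemma choice_val_true (p : Fin (N k)) :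
    (choice k p true).val = if 2 <= p.val then p.val / 2 else 0 := by
  unfold choice; split_ifs <;> simp_all

lemma choice_val_false (p : Fin (N k)) :
    (choice k p false).val = if 2 <= p.val then p.val else 0 := by
  unfold choice; split_ifs <;> simp_all

def tribe (p : Fin (N k)) : Bool := decide (p.val % 2 = 0)

noncomputable def nfun (v : Fin (N k)) (b : Fin (N k) → Bool) : ℕ :=
  (univ.filter (fun p : Fin (N k) => choice k p (b p) = v)).card

noncomputable def cfun (p : Fin (N k)) (b : Fin (N k) → Bool) : ℝ :=
  an k (choice k p (b p)).val * (nfun k (choice k p (b p)) b : ℝ)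

noncomputable def ctfun (p : Fin (N k)) (b : Fin (N k) → Bool) : ℝ :=
  ∑ q ∈ univ.filter (fun q : Fin (N k) => tribe k q = tribe k p), cfun k q b

noncomputable def Cfun (b : Fin (N k) → Bool) : ℝ := ∑ p, cfun k p b

def sup : Fin (N k) → Bool := fun _ => true
def sdown : Fin (N k) → Bool := fun _ => false

lemma choice_true_val_lt_M (p : Fin (N k)) : (choice k p true).val < M k := by
  have hN := N_eq k
  have hp := p.isLt
  have h1 : 1 <= M k := Nat.one_le_two_pow
  rw [choice_val_true]
  split_ifs <;> omega

/-- filter for all-up profile -/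
lemma filter_sup (v : Fin (N k)) (hv : v.val < M k) :
    (univ.filter (fun p : Fin (N k) => choice k p (sup k p) = v)) =
      {⟨2 * v.val, by have := N_eq k; omega⟩, ⟨2 * v.val + 1, by have := N_eq k; omega⟩} := by
  ext q
  have hq := q.isLt
  have hN := N_eq k
  simp only [mem_filter, mem_univ, true_and, mem_insert, mem_singleton, Fin.ext_iff,
    Fin.val_mk, sup, choice_val_true]
  split_ifs <;> omega

lemma nfun_sup (v : Fin (N k)) : nfun k v (sup k) = if v.val < M k then 2 else 0 := by
  split_ifs with hv
  · rw [nfun, filter_sup k v hv]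
    rw [card_insert_of_notMem (by simp [Fin.ext_iff]), card_singleton]
  · rw [nfun, filter_eq_empty_iff.mpr, card_empty]
    intro q _ he
    have := choice_true_val_lt_M k q
    rw [show (true : Bool) = sup k q from rfl, he] at this
    omega

lemma nfun_sdown (v : Fin (N k)) :
    nfun k v (sdown k) = if 2 <= v.val then 1 else if v.val = 0 then 2 else 0 := by
  have hN := N_eq k
  have h1 : 1 <= M k := Nat.one_le_two_pow
  split_ifs with h2 h0
  · rw [nfun]
    rw [show (univ.filter (fun p : Fin (N k) => choice k p (sdown k p) = v)) = {v} from ?_,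
      card_singleton]
    ext q
    have hq := q.isLt
    simp only [mem_filter, mem_univ, true_and, mem_singleton, Fin.ext_iff, sdown, choice_val_false]
    split_ifs <;> omega
  · rw [nfun]
    rw [show (univ.filter (fun p : Fin (N k) => choice k p (sdown k p) = v)) =
        {⟨0, Npos k⟩, ⟨1, by omega⟩} from ?_]
    · rw [card_insert_of_notMem (by simp [Fin.ext_iff]), card_singleton]
    ext q
    have hq := q.isLt
    simp only [mem_filter, mem_univ, true_and, mem_insert, mem_singleton, Fin.ext_iff,
      Fin.val_mk, sdown, choice_val_false]
    split_ifs <;> omega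
  · rw [nfun, filter_eq_empty_iff.mpr, card_empty]
    intro q _ he
    rw [Fin.ext_iff] at he
    simp only [sdown, choice_val_false] at he
    revert he
    split_ifs <;> omega


lemma Cfun_eq_sum_nodes (b : Fin (N k) → Bool) :
    Cfun k b = ∑ v : Fin (N k), (nfun k v b : ℝ) * (an k v.val * (nfun k v b : ℝ)) := by
  rw [Cfun, ← Finset.sum_fiberwise_of_maps_to (g := fun p => choice k p (b p))
    (t := univ) (fun i _ => mem_univ _) (fun p => cfun k p b)]
  refine Finset.sum_congr rfl fun v _ => ?_
  have : ∀ p ∈ univ.filter (fun p : Fin (N k) => choice k p (b p) = v),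
      cfun k p b = an k v.val * (nfun k v b : ℝ) := by
    intro p hp
    rw [mem_filter] at hp
    rw [cfun, hp.2]
  rw [Finset.sum_congr rfl this, Finset.sum_const, ← nfun, nsmul_eq_mul]

lemma sum_an_M : ∑ v ∈ Finset.range (M k), an k v = k := by
  have : ∀ v ∈ Finset.range (M k), an k v = g v := by
    intro v hv
    rw [mem_range] at hv
    rw [an, g]
    split_ifs <;> first | rfl | omega
  rw [Finset.sum_congr rfl this, sum_g]

lemma Cfun_sup : Cfun k (sup k) = 4 * k := by
  rw [Cfun_eq_sum_nodes]
  have hrw : ∀ v : Fin (N k), (nfun k v (sup k) : ℝ) * (an k v.val * (nfun k v (sup k) : ℝ))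
      = (fun x : ℕ => ((if x < M k then 2 else 0 : ℕ) : ℝ) *
          (an k x * ((if x < M k then 2 else 0 : ℕ) : ℝ))) v.val := by
    intro v; rw [nfun_sup]
  rw [Finset.sum_congr rfl (fun v _ => hrw v),
    Fin.sum_univ_eq_sum_range (fun x : ℕ => ((if x < M k then 2 else 0 : ℕ) : ℝ) *
      (an k x * ((if x < M k then 2 else 0 : ℕ) : ℝ))) (N k), N_eq]
  have hsplit : ∀ F : ℕ → ℝ, ∑ i ∈ Finset.range (2 * M k), F i
      = ∑ i ∈ Finset.range (M k), F i + ∑ i ∈ Finset.Ico (M k) (2 * M k), F i := by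
    intro F
    rw [Finset.range_eq_Ico, ← Finset.sum_Ico_consecutive F (Nat.zero_le (M k)) (by omega : M k ≤ 2 * M k),
      ← Finset.range_eq_Ico]
  rw [hsplit]
  have h2 : ∑ v ∈ Finset.Ico (M k) (2 * M k),
      ((if v < M k then 2 else 0 : ℕ) : ℝ) * (an k v * ((if v < M k then 2 else 0 : ℕ) : ℝ)) = 0 := by
    refine Finset.sum_eq_zero fun v hv => ?_
    rw [mem_Ico] at hv
    rw [if_neg (by omega)]
    push_cast
    ring
  rw [h2, add_zero]
  have h1 : ∀ v ∈ Finset.range (M k),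
      ((if v < M k then 2 else 0 : ℕ) : ℝ) * (an k v * ((if v < M k then 2 else 0 : ℕ) : ℝ))
        = 4 * an k v := by
    intro v hv
    rw [mem_range] at hv
    rw [if_pos hv]
    push_cast
    ring
  rw [Finset.sum_congr rfl h1, ← Finset.mul_sum, sum_an_M]

lemma an_one (hk : 1 ≤ k) : an k 1 = 1 := by
  have h : 1 < 2 ^ k := Nat.one_lt_two_pow_iff.mpr (by omega)
  rw [an, if_neg one_ne_zero, if_pos h, Nat.log_one_right, pow_zero]

lemma Cfun_sdown (hk : 1 ≤ k) : Cfun k (sdown k) = k + 3 := by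
  have hMd : M k = 2 ^ k := rfl
  rw [Cfun_eq_sum_nodes]
  have hrw : ∀ v : Fin (N k), (nfun k v (sdown k) : ℝ) * (an k v.val * (nfun k v (sdown k) : ℝ))
      = (fun x : ℕ => ((if 2 <= x then 1 else if x = 0 then 2 else 0 : ℕ) : ℝ) *
          (an k x * ((if 2 <= x then 1 else if x = 0 then 2 else 0 : ℕ) : ℝ))) v.val := by
    intro v; rw [nfun_sdown]
  rw [Finset.sum_congr rfl (fun v _ => hrw v),
    Fin.sum_univ_eq_sum_range (fun x : ℕ => ((if 2 <= x then 1 else if x = 0 then 2 else 0 : ℕ) : ℝ) *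
      (an k x * ((if 2 <= x then 1 else if x = 0 then 2 else 0 : ℕ) : ℝ))) (N k)]
  have hsimp : ∀ v ∈ Finset.range (N k),
      ((if 2 <= v then 1 else if v = 0 then 2 else 0 : ℕ) : ℝ) *
        (an k v * ((if 2 <= v then 1 else if v = 0 then 2 else 0 : ℕ) : ℝ))
      = if 2 <= v then an k v else 0 := by
    intro v _
    split_ifs with h h0
    · push_cast; ring
    · rw [an, if_pos h0]; push_cast; ring
    · push_cast; ring
  rw [Finset.sum_congr rfl hsimp]
  have hN := N_eq k
  have hM1 : 1 ≤ M k := Nat.one_le_two_pow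
  have e1 : ∑ v ∈ Finset.range (N k), (if 2 <= v then an k v else 0)
      = ∑ v ∈ Finset.Ico 2 (N k), an k v := by
    rw [Finset.range_eq_Ico, ← Finset.sum_Ico_consecutive _ (by omega : (0:ℕ) ≤ 2) (by omega)]
    have hz : ∑ v ∈ Finset.Ico 0 2, (if 2 <= v then an k v else 0) = 0 := by
      refine Finset.sum_eq_zero fun v hv => ?_
      rw [mem_Ico] at hv
      rw [if_neg (by omega)]
    rw [hz, zero_add]
    refine Finset.sum_congr rfl fun v hv => ?_
    rw [mem_Ico] at hv
    rw [if_pos hv.1]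
  rw [e1]
  have e2 : ∑ v ∈ Finset.Ico 1 2, an k v = 1 := by
    rw [Finset.sum_Ico_eq_sum_range]
    simp [an_one k hk]
  have e3 : ∑ v ∈ Finset.Ico 1 (M k), an k v = k := by
    have : ∑ v ∈ Finset.Ico 0 1, an k v + ∑ v ∈ Finset.Ico 1 (M k), an k v
        = ∑ v ∈ Finset.Ico 0 (M k), an k v :=
      Finset.sum_Ico_consecutive _ (by omega) (by omega)
    have h0 : ∑ v ∈ Finset.Ico 0 1, an k v = 0 := by simp [an]
    rw [h0, zero_add] at this
    rw [this, ← Finset.range_eq_Ico, sum_an_M]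
  have e4 : ∑ v ∈ Finset.Ico (M k) (N k), an k v = 4 := by
    have hc : ∀ v ∈ Finset.Ico (M k) (N k), an k v = 4 * (2:ℝ)⁻¹ ^ k := by
      intro v hv
      rw [mem_Ico] at hv
      rw [an, if_neg (by omega), if_neg (by omega)]
    rw [Finset.sum_congr rfl hc, Finset.sum_const, Nat.card_Ico, nsmul_eq_mul]
    have : N k - M k = M k := by omega
    rw [this]
    have h := two_pow_inv_mul k
    calc (↑(M k) : ℝ) * (4 * 2⁻¹ ^ k) = 4 * ((2:ℝ)^k * (2:ℝ)⁻¹ ^ k) := by push_cast [M]; ring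
    _ = 4 := by rw [h]; norm_num
  have e5 : ∑ v ∈ Finset.Ico 1 (N k), an k v = (k : ℝ) + 4 := by
    rw [← Finset.sum_Ico_consecutive _ (by omega : 1 ≤ M k) (by omega : M k ≤ N k), e3, e4]
  have e6 : ∑ v ∈ Finset.Ico 1 2, an k v + ∑ v ∈ Finset.Ico 2 (N k), an k v
      = ∑ v ∈ Finset.Ico 1 (N k), an k v :=
    Finset.sum_Ico_consecutive _ (by omega) (by omega)
  rw [e2, e5] at e6
  linarith


lemma choice_junk (p : Fin (N k)) (hp : p.val < 2) (b : Bool) :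
    choice k p b = ⟨0, Npos k⟩ := by
  unfold choice; rw [if_neg (by omega)]

lemma choice_false_eq (p : Fin (N k)) (hp : 2 <= p.val) : choice k p false = p := by
  simp [choice, hp]

lemma tribe_eq_iff (q p : Fin (N k)) :
    tribe k q = tribe k p ↔ q.val % 2 = p.val % 2 := by
  unfold tribe
  rw [decide_eq_decide]
  omega

lemma nash (hk : 1 ≤ k) (p : Fin (N k)) :
    ctfun k p (sup k) ≤ ctfun k p (Function.update (sup k) p (!(sup k p))) := by
  have hb : (!(sup k p)) = false := rfl
  rw [hb]
  set s' := Function.update (sup k) p false with hs'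
  have hchoice' : ∀ q : Fin (N k), q ≠ p → choice k q (s' q) = choice k q true := by
    intro q hq; rw [hs', Function.update_of_ne hq]; rfl
  have hchoicep : choice k p (s' p) = choice k p false := by
    rw [hs', Function.update_self]
  by_cases hp2 : 2 ≤ p.val
  swap
  · -- junk player: nothing changes
    have hposeq : ∀ q, choice k q (s' q) = choice k q (sup k q) := by
      intro q
      by_cases hq : q = p
      · subst hq
        rw [hchoicep, choice_junk k q (by omega) false, choice_junk k q (by omega) (sup k q)]
      · rw [hchoice' q hq]; rfl
    have hn : ∀ v, nfun k v s' = nfun k v (sup k) := by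
      intro v; unfold nfun; congr 1
      apply Finset.filter_congr; intro q _; rw [hposeq q]
    have hc : ∀ q, cfun k q s' = cfun k q (sup k) := by
      intro q; rw [cfun, cfun, hposeq q, hn]
    refine le_of_eq ?_
    unfold ctfun
    exact (Finset.sum_congr rfl fun q _ => (hc q).symm)
  -- real player
  have hN := N_eq k
  have hMd : M k = 2 ^ k := rfl
  have hM1 : 1 ≤ M k := Nat.one_le_two_pow
  have hplt := p.isLt
  have hNd : N k = 2 ^ (k+1) := rfl
  -- the parent node
  set pup : Fin (N k) := choice k p true with hpup
  have hpupval : pup.val = p.val / 2 := by rw [hpup, choice_val_true, if_pos hp2]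
  have hpupM : pup.val < M k := choice_true_val_lt_M k p
  have hppos : choice k p (s' p) = p := by rw [hchoicep, choice_false_eq k p hp2]
  have hpupne : pup ≠ p := by
    intro h
    rw [Fin.ext_iff, hpupval] at h
    omega
  -- (i) congestion unchanged away from pup and p
  have hnsame : ∀ v : Fin (N k), v ≠ pup → v ≠ p → nfun k v s' = nfun k v (sup k) := by
    intro v hv1 hv2
    unfold nfun
    congr 1
    ext q
    simp only [mem_filter, mem_univ, true_and]
    by_cases hq : q = p
    · subst hq
      rw [hppos, show choice k q (sup k q) = pup from rfl]
      constructor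
      · intro h; exact absurd h.symm hv2
      · intro h; exact absurd h.symm hv1
    · rw [hchoice' q hq]; rfl
  -- (ii) congestion at p increases by one
  have hnp : nfun k p s' = nfun k p (sup k) + 1 := by
    unfold nfun
    have hins : (univ.filter (fun q : Fin (N k) => choice k q (s' q) = p))
        = insert p (univ.filter (fun q : Fin (N k) => choice k q (sup k q) = p)) := by
      ext q
      simp only [mem_filter, mem_univ, true_and, mem_insert]
      by_cases hq : q = p
      · subst hq
        constructor
        · intro _; exact Or.inl rfl
        · intro _; exact hppos
      · rw [hchoice' q hq]
        constructor
        · intro h; exact Or.inr h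
        · rintro (h | h)
          · exact absurd h hq
          · exact h
    rw [hins, card_insert_of_notMem]
    intro hmem
    rw [mem_filter] at hmem
    exact hpupne hmem.2
  -- costs under sup
  have hcsup : cfun k p (sup k) = an k pup.val * 2 := by
    rw [cfun]
    rw [show choice k p (sup k p) = pup from rfl]
    rw [nfun_sup, if_pos hpupM]
    norm_num
  have hnpsup : nfun k p (sup k) = if p.val < M k then 2 else 0 := nfun_sup k p
  -- cost of p after deviation
  have hcp' : cfun k p s' = an k p.val * ((if p.val < M k then 2 else 0) + 1 : ℕ) := by
    rw [cfun, hppos, hnp, hnpsup]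
  -- the same-tribe relevant q's: f q = 0 unless q = p or q = child
  have hzero : ∀ q : Fin (N k), tribe k q = tribe k p → q ≠ p →
      q.val ≠ 2 * p.val + p.val % 2 →
      cfun k q s' = cfun k q (sup k) := by
    intro q htr hqp hqc
    have hpar := (tribe_eq_iff k q p).mp htr
    have hqlt := q.isLt
    have hposq : choice k q (s' q) = choice k q (sup k q) := by
      rw [hchoice' q hqp]; rfl
    have hvalq : (choice k q (sup k q)).val = if 2 <= q.val then q.val / 2 else 0 :=
      choice_val_true k q
    have hne1 : choice k q (sup k q) ≠ pup := by
      intro he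
      rw [Fin.ext_iff, hvalq, hpupval] at he
      revert he
      split_ifs with h
      · intro he
        exact hqp (Fin.ext (by omega))
      · intro he; omega
    have hne2 : choice k q (sup k q) ≠ p := by
      intro he
      rw [Fin.ext_iff, hvalq] at he
      revert he
      split_ifs with h
      · intro he; exact hqc (by omega)
      · intro he; omega
    rw [cfun, cfun, hposq, hnsame _ hne1 hne2]
  refine le_of_eq ?_
  unfold ctfun
  rw [← sub_eq_zero, ← Finset.sum_sub_distrib, ← neg_eq_zero, ← Finset.sum_neg_distrib]
  simp only [neg_sub]
  -- now goal: ∑ q ∈ T, (cfun q s' - cfun q sup) = 0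
  have hp0 : p.val ≠ 0 := by omega
  by_cases hpM : p.val < M k
  · -- internal node: support {p, child}
    set ch : Fin (N k) := ⟨2 * p.val + p.val % 2, by omega⟩ with hch
    have hchval : ch.val = 2 * p.val + p.val % 2 := rfl
    have hchne : ch ≠ p := by
      intro h; rw [Fin.ext_iff, hchval] at h; omega
    have hchtr : tribe k ch = tribe k p := by
      rw [tribe_eq_iff, hchval]; omega
    have hch2 : 2 ≤ ch.val := by rw [hchval]; omega
    have hchpos : choice k ch (s' ch) = p := by
      rw [hchoice' ch hchne]
      apply Fin.ext_iff.mpr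
      rw [choice_val_true, if_pos hch2, hchval]
      omega
    have hchpossup : choice k ch (sup k ch) = p := by
      apply Fin.ext_iff.mpr
      rw [show sup k ch = true from rfl, choice_val_true, if_pos hch2, hchval]
      omega
    have hsub : ({p, ch} : Finset (Fin (N k))) ⊆
        univ.filter (fun q : Fin (N k) => tribe k q = tribe k p) := by
      intro q hq
      rw [mem_insert, mem_singleton] at hq
      rw [mem_filter]
      rcases hq with h | h <;> subst h
      · exact ⟨mem_univ _, rfl⟩
      · exact ⟨mem_univ _, hchtr⟩
    rw [← Finset.sum_subset hsub ?van]
    case van =>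
      intro q hq hq2
      rw [mem_filter] at hq
      rw [mem_insert, mem_singleton] at hq2
      push_neg at hq2
      have : q.val ≠ 2 * p.val + p.val % 2 := by
        intro h
        exact hq2.2 (Fin.ext_iff.mpr (by rw [hchval, h]))
      rw [hzero q hq.2 hq2.1 this, sub_self]
    rw [Finset.sum_pair (Ne.symm hchne)]
    -- evaluate the four costs
    have hcps' : cfun k p s' = an k p.val * 3 := by
      rw [hcp', if_pos hpM]; norm_num
    have hcchs' : cfun k ch s' = an k p.val * 3 := by
      rw [cfun, hchpos, hnp, hnpsup, if_pos hpM]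
      norm_num
    have hcchsup : cfun k ch (sup k) = an k p.val * 2 := by
      rw [cfun, hchpossup, nfun_sup, if_pos hpM]
      norm_num
    rw [hcps', hcchs', hcchsup, hcsup, hpupval]
    -- the α relation: an (p/2) = 2 * an p
    have hlog : 0 < Nat.log 2 p.val := Nat.log_pos (by norm_num) hp2
    have hpMk : p.val < 2 ^ k := by omega
    have hanp : an k p.val = (2:ℝ)⁻¹ ^ Nat.log 2 p.val := by
      rw [an, if_neg hp0, if_pos hpMk]
    have hanp2 : an k (p.val / 2) = (2:ℝ)⁻¹ ^ (Nat.log 2 p.val - 1) := by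
      rw [an, if_neg (by omega), if_pos (by omega), Nat.log_div_base]
    have hrel : an k (p.val / 2) = 2 * an k p.val := by
      rw [hanp, hanp2, show Nat.log 2 p.val = (Nat.log 2 p.val - 1) + 1 from by omega,
        pow_succ]
      ring_nf
      congr 1
      omega
    rw [hrel]
    ring
  · -- leaf node: support {p}
    have hsub : ({p} : Finset (Fin (N k))) ⊆
        univ.filter (fun q : Fin (N k) => tribe k q = tribe k p) := by
      intro q hq
      rw [mem_singleton] at hq; subst hq
      exact mem_filter.mpr ⟨mem_univ _, rfl⟩
    rw [← Finset.sum_subset hsub ?van2]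
    case van2 =>
      intro q hq hq2
      rw [mem_filter] at hq
      rw [mem_singleton] at hq2
      have : q.val ≠ 2 * p.val + p.val % 2 := by
        have := q.isLt; omega
      rw [hzero q hq.2 hq2 this, sub_self]
    rw [Finset.sum_singleton]
    have hcps' : cfun k p s' = an k p.val * 1 := by
      rw [hcp', if_neg hpM]; norm_num
    rw [hcps', hcsup, hpupval]
    -- α values at a leaf
    have hpow : 2 ^ k = 2 * 2 ^ (k - 1) := by
      rw [← pow_succ']
      congr 1
      omega
    have hanp : an k p.val = 4 * (2:ℝ)⁻¹ ^ k := by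
      rw [an, if_neg hp0, if_neg (by omega)]
    have hlogp2 : Nat.log 2 (p.val / 2) = k - 1 := by
      apply Nat.log_eq_of_pow_le_of_lt_pow
      · omega
      · rw [show k - 1 + 1 = k from by omega]; omega
    have hanp2 : an k (p.val / 2) = (2:ℝ)⁻¹ ^ (k - 1) := by
      rw [an, if_neg (by omega), if_pos (by omega), hlogp2]
    rw [hanp, hanp2, show k = (k - 1) + 1 from by omega, pow_succ]
    ring_nf
    rw [show 1 + (k - 1) - 1 = k - 1 from by omega]
    ring

end Stmt17Aux

open Finset

/-- PoT lower bound for atomic linear congestion games: for every k ≥ 1 there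
is a load-balancing game (each player chooses one of two nodes with linear
costs) with a 2-tribe partition and a tribal Nash equilibrium of total cost
4k, while some profile has total cost k + 3; hence the ratio is 4k/(k+3). -/
theorem stmt_17 (k : ℕ) (hk : 1 ≤ k) :
    ∃ (V P : Type) (_ : Fintype V) (_ : Fintype P) (_ : DecidableEq V) (_ : DecidableEq P)
      (α : V → ℝ)                      -- linear cost coefficients of the nodes
      (choice : P → Bool → V)          -- each player picks one of two nodes
      (τ : P → Bool)                   -- a partition into two tribes
      (n : V → (P → Bool) → ℕ)         -- congestion
      (c : P → (P → Bool) → ℝ)         -- player costs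
      (cτ : P → (P → Bool) → ℝ)        -- tribal costs
      (C : (P → Bool) → ℝ)             -- total cost
      (s slow : P → Bool),             -- the equilibrium and the cheap profile
      (∀ v, 0 ≤ α v) ∧
      (∀ v b, n v b = (univ.filter (fun p : P => choice p (b p) = v)).card) ∧
      (∀ p b, c p b = α (choice p (b p)) * (n (choice p (b p)) b : ℝ)) ∧
      (∀ p b, cτ p b = ∑ q ∈ univ.filter (fun q : P => τ q = τ p), c q b) ∧
      (∀ b, C b = ∑ p, c p b) ∧
      -- s is a tribal Nash equilibrium (flipping is the only deviation)
      (∀ p : P, cτ p s ≤ cτ p (Function.update s p (!s p))) ∧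
      C s = 4 * (k : ℝ) ∧
      C slow = (k : ℝ) + 3 ∧
      C s / C slow = 4 * (k : ℝ) / ((k : ℝ) + 3) := by
  refine ⟨Fin (Stmt17Aux.N k), Fin (Stmt17Aux.N k), inferInstance, inferInstance,
    inferInstance, inferInstance,
    fun v => Stmt17Aux.an k v.val, Stmt17Aux.choice k, Stmt17Aux.tribe k,
    Stmt17Aux.nfun k, Stmt17Aux.cfun k, Stmt17Aux.ctfun k, Stmt17Aux.Cfun k,
    Stmt17Aux.sup k, Stmt17Aux.sdown k,
    fun v => Stmt17Aux.an_nonneg k v.val,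
    fun v b => rfl,
    fun p b => rfl,
    fun p b => rfl,
    fun b => rfl,
    Stmt17Aux.nash k hk,
    Stmt17Aux.Cfun_sup k,
    Stmt17Aux.Cfun_sdown k hk,
    ?_⟩
  rw [Stmt17Aux.Cfun_sup k, Stmt17Aux.Cfun_sdown k hk]
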